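/- (Lemma 2, case ⌈κ(s)⌉ > D.) Let k ≥ 3, D ∈ {2,…,k}, and let Ω be the truncated Soliton distribution with mean d̄. Let 1 ≤ s ≤ k/2 with ⌈κ(s)⌉ > D, and set Σ_s ≥ (2s/5)·Σ_{d=1}^{⌈κ(s)⌉-1} d·Ω_d/(k-d+1). Then Σ_s > 2s·d̄/(5k), and consequently if n·d̄ ≥ 5k·log k then C(k,s)·e^{-n·Σ_s} < k^{-s}. -/

import Mathlib

/-- Lemma 2, case `⌈κ(s)⌉ > D`: under the truncated Soliton distribution,
    `Σ_s > 2s·d̄/(5k)`, and if `n·d̄ ≥ 5k log k` then `C(k,s)e^{-nΣ_s} < k^{-s}`. -/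
theorem sigma_bound_large_kappa (k D s n : ℕ) (hk : 3 ≤ k) (hD2 : 2 ≤ D) (hDk : D ≤ k)
    (hs : 1 ≤ s) (hsk : (s : ℝ) ≤ (k : ℝ) / 2)
    (Ω : ℕ → ℝ)
    (hΩ : ∀ d, Ω d = if d = 1 then 1 / (D : ℝ)
      else if 2 ≤ d ∧ d ≤ D then 1 / ((d : ℝ) * ((d : ℝ) - 1)) else 0)
    (dbar : ℝ) (hdbar : dbar = ∑ d ∈ Finset.Icc 1 D, (1 : ℝ) / d)
    (κ : ℝ) (hκ : κ = ((k : ℝ) - s + 1) / (2 * (s : ℝ) + 1))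
    (hκD : D < ⌈κ⌉₊)
    (Ss : ℝ)
    (hSs : Ss ≥ (2 * (s : ℝ) / 5) *
      ∑ d ∈ Finset.Icc 1 (⌈κ⌉₊ - 1), (d : ℝ) * Ω d / ((k : ℝ) - d + 1)) :
    Ss > 2 * (s : ℝ) * dbar / (5 * k) ∧
    ((n : ℝ) * dbar ≥ 5 * (k : ℝ) * Real.log k →
      (k.choose s : ℝ) * Real.exp (-(n : ℝ) * Ss) < (k : ℝ) ^ (-(s : ℝ))) := by
  have hk3 : (3:ℝ) ≤ (k:ℝ) := by exact_mod_cast hk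
  have hkpos : (0:ℝ) < k := by linarith
  have hD2' : (2:ℝ) ≤ (D:ℝ) := by exact_mod_cast hD2
  have hDk' : (D:ℝ) ≤ (k:ℝ) := by exact_mod_cast hDk
  have hs1 : (1:ℝ) ≤ (s:ℝ) := by exact_mod_cast hs
  have hDT : D ≤ ⌈κ⌉₊ - 1 := by omega
  -- value of d * Ω d on Icc 1 D
  have hval : ∀ d ∈ Finset.Icc 1 D, (d:ℝ) * Ω d
      = if d = 1 then 1 / (D:ℝ) else 1 / ((d:ℝ) - 1) := by
    intro d hd
    rw [Finset.mem_Icc] at hd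
    rw [hΩ d]
    by_cases h1 : d = 1
    · simp [h1]
    · have h2 : 2 ≤ d := by omega
      have h2' : (2:ℝ) ≤ (d:ℝ) := by exact_mod_cast h2
      rw [if_neg h1, if_neg h1, if_pos ⟨h2, hd.2⟩]
      have hd0 : (d:ℝ) ≠ 0 := by linarith
      have hd1 : (d:ℝ) - 1 ≠ 0 := by linarith
      field_simp
  -- the key identity : ∑ d * Ω d = dbar
  have hsum_dΩ : ∑ d ∈ Finset.Icc 1 D, (d:ℝ) * Ω d = dbar := by
    rw [hdbar, Finset.sum_congr rfl hval]
    have h1mem : 1 ∈ Finset.Icc 1 D := by simp; omega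
    rw [← Finset.add_sum_erase _ _ h1mem, Finset.Icc_erase_left]
    have hIoc : Finset.Ioc 1 D = Finset.Icc 2 D := by rw [← Finset.Icc_add_one_left_eq_Ioc]; norm_num
    rw [hIoc, if_pos rfl]
    have hmap : Finset.Icc 2 D = Finset.map (addRightEmbedding 1) (Finset.Icc 1 (D-1)) := by
      rw [Finset.map_add_right_Icc]
      congr 1
      omega
    rw [hmap, Finset.sum_map]
    simp only [addRightEmbedding_apply]
    have hre : ∀ d ∈ Finset.Icc 1 (D-1),
        (if d + 1 = 1 then 1 / (D:ℝ) else 1 / (((d + 1 : ℕ) : ℝ) - 1))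
        = 1 / (d:ℝ) := by
      intro d hd
      rw [Finset.mem_Icc] at hd
      rw [if_neg (by omega)]
      push_cast
      norm_num
    rw [Finset.sum_congr rfl hre]
    have hD1 : D = (D - 1) + 1 := by omega
    rw [hD1, Finset.sum_Icc_succ_top (by omega)]
    rw [← hD1]
    ring
  -- extend the sum from Icc 1 D to Icc 1 (⌈κ⌉₊ - 1)
  have hext : ∑ d ∈ Finset.Icc 1 (⌈κ⌉₊ - 1), (d:ℝ) * Ω d / ((k:ℝ) - d + 1)
      = ∑ d ∈ Finset.Icc 1 D, (d:ℝ) * Ω d / ((k:ℝ) - d + 1) := by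
    refine (Finset.sum_subset ?_ ?_).symm
    · intro x hx
      rw [Finset.mem_Icc] at hx ⊢
      omega
    · intro x hx hx'
      rw [Finset.mem_Icc] at hx hx'
      have : Ω x = 0 := by
        rw [hΩ x, if_neg (by omega), if_neg (by omega)]
      rw [this]
      ring
  -- strict inequality against dbar / k
  have hΩnn : ∀ d, 0 ≤ Ω d := by
    intro d
    rw [hΩ d]
    split_ifs with h1 h2
    · positivity
    · have : (2:ℝ) ≤ (d:ℝ) := by exact_mod_cast h2.1
      have : (0:ℝ) < (d:ℝ) * ((d:ℝ) - 1) := by nlinarith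
      positivity
    · exact le_refl 0
  have hstrict : ∑ d ∈ Finset.Icc 1 D, (d:ℝ) * Ω d / ((k:ℝ) - d + 1)
      > ∑ d ∈ Finset.Icc 1 D, (d:ℝ) * Ω d / (k:ℝ) := by
    apply Finset.sum_lt_sum
    · intro i hi
      rw [Finset.mem_Icc] at hi
      have hi1 : (1:ℝ) ≤ (i:ℝ) := by exact_mod_cast hi.1
      have hiD : (i:ℝ) ≤ (D:ℝ) := by exact_mod_cast hi.2
      have hden : (0:ℝ) < (k:ℝ) - i + 1 := by linarith
      have hdle : (k:ℝ) - i + 1 ≤ (k:ℝ) := by linarith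
      have hnum : 0 ≤ (i:ℝ) * Ω i := by
        have := hΩnn i; positivity
      exact div_le_div_of_nonneg_left hnum hden hdle
    · refine ⟨2, by rw [Finset.mem_Icc]; omega, ?_⟩
      have hΩ2 : Ω 2 = 1/2 := by
        rw [hΩ 2, if_neg (by omega), if_pos ⟨le_refl 2, hD2⟩]
        norm_num
      have hden : (0:ℝ) < (k:ℝ) - 2 + 1 := by push_cast; linarith
      have hdlt : (k:ℝ) - (2:ℕ) + 1 < (k:ℝ) := by push_cast; linarith
      have hnum : (0:ℝ) < ((2:ℕ):ℝ) * Ω 2 := by rw [hΩ2]; norm_num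
      exact div_lt_div_of_pos_left hnum hden hdlt
  have hfinal1 : ∑ d ∈ Finset.Icc 1 (⌈κ⌉₊ - 1), (d:ℝ) * Ω d / ((k:ℝ) - d + 1) > dbar / (k:ℝ) := by
    rw [hext]
    calc dbar / (k:ℝ) = ∑ d ∈ Finset.Icc 1 D, (d:ℝ) * Ω d / (k:ℝ) := by
          rw [← hsum_dΩ, Finset.sum_div]
      _ < _ := hstrict
  have hpart1 : Ss > 2 * (s : ℝ) * dbar / (5 * k) := by
    have h25 : (0:ℝ) < 2 * (s:ℝ) / 5 := by linarith
    have := mul_lt_mul_of_pos_left hfinal1 h25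
    calc 2 * (s : ℝ) * dbar / (5 * k) = (2 * (s:ℝ) / 5) * (dbar / k) := by ring
      _ < (2 * (s:ℝ) / 5) * ∑ d ∈ Finset.Icc 1 (⌈κ⌉₊ - 1), (d:ℝ) * Ω d / ((k:ℝ) - d + 1) := this
      _ ≤ Ss := hSs
  refine ⟨hpart1, ?_⟩
  intro hn
  have hlogk : 0 < Real.log k := Real.log_pos (by linarith)
  have hdbarpos : 0 < dbar := by
    rw [hdbar]
    apply Finset.sum_pos
    · intro i hi
      rw [Finset.mem_Icc] at hi
      have : (1:ℝ) ≤ (i:ℝ) := by exact_mod_cast hi.1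
      positivity
    · exact ⟨1, by rw [Finset.mem_Icc]; omega⟩
  have hnpos : (0:ℝ) < n := by
    rcases Nat.eq_zero_or_pos n with h | h
    · exfalso
      rw [h] at hn
      push_cast at hn
      nlinarith
    · exact_mod_cast h
  -- n * Ss > 2 s log k
  have hkey : (n:ℝ) * Ss > 2 * (s:ℝ) * Real.log k := by
    have h1 : (n:ℝ) * Ss > (n:ℝ) * (2 * (s:ℝ) * dbar / (5 * k)) :=
      mul_lt_mul_of_pos_left hpart1 hnpos
    have h2 : (n:ℝ) * (2 * (s:ℝ) * dbar / (5 * k)) = (2 * (s:ℝ) / (5 * k)) * ((n:ℝ) * dbar) := by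
      ring
    have h3 : (2 * (s:ℝ) / (5 * k)) * ((n:ℝ) * dbar) ≥ (2 * (s:ℝ) / (5 * k)) * (5 * (k:ℝ) * Real.log k) := by
      apply mul_le_mul_of_nonneg_left hn
      positivity
    have h4 : (2 * (s:ℝ) / (5 * k)) * (5 * (k:ℝ) * Real.log k) = 2 * (s:ℝ) * Real.log k := by
      field_simp
    nlinarith [h1, h3]
  -- choose bound
  have hchoose : (k.choose s : ℝ) ≤ (k:ℝ) ^ s := by
    have := (Nat.choose_le_descFactorial k s).trans (Nat.descFactorial_le_pow k s)
    exact_mod_cast this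
  have hexp : Real.exp (-(n:ℝ) * Ss) < (k:ℝ) ^ (-(2 * (s:ℝ))) := by
    rw [Real.rpow_def_of_pos hkpos]
    apply Real.exp_lt_exp.mpr
    linarith [hkey]
  have hchoosenn : (0:ℝ) ≤ (k.choose s : ℝ) := by positivity
  have hexppos : 0 < Real.exp (-(n:ℝ) * Ss) := Real.exp_pos _
  calc (k.choose s : ℝ) * Real.exp (-(n : ℝ) * Ss)
      ≤ (k:ℝ) ^ s * Real.exp (-(n:ℝ) * Ss) := by
        apply mul_le_mul_of_nonneg_right hchoose (le_of_lt hexppos)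
    _ < (k:ℝ) ^ s * (k:ℝ) ^ (-(2 * (s:ℝ))) := by
        apply mul_lt_mul_of_pos_left hexp
        positivity
    _ = (k : ℝ) ^ (-(s:ℝ)) := by
        rw [← Real.rpow_natCast (k:ℝ) s, ← Real.rpow_add hkpos]
        congr 1
        ring
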